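/- Let Λ be an artin algebra and let 0 → N →j→ E →π→ M → 0 be an almost split sequence in mod Λ. Then the sequence 0 → (1_N : N → N) → (j : N → E) → (0 → M) → 0 in maps(mod Λ), whose first morphism has components 1_N : N → N and j : N → E, and whose second morphism has components 0 : N → 0 and π : E → M, is an almost split sequence in maps(mod Λ). -/

import Mathlib

open CategoryTheory CategoryTheory.Limits

universe u

/-- An object of a category is indecomposable if it is nonzero and in any direct sum
decomposition (encoded as a compatible product-and-coproduct diagram) one of the two
summands is zero. -/
def IsIndecomposable {C : Type*} [Category C] (X : C) : Prop :=
  ¬ IsZero X ∧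
    ∀ ⦃Y Z : C⦄ (p : X ⟶ Y) (q : X ⟶ Z) (i : Y ⟶ X) (j : Z ⟶ X),
      i ≫ p = 𝟙 Y → j ≫ q = 𝟙 Z →
      Nonempty (IsLimit (BinaryFan.mk p q)) →
      Nonempty (IsColimit (BinaryCofan.mk i j)) →
      IsZero Y ∨ IsZero Z

/-- The categorical conditions for a short exact sequence `0 → N → E → M → 0` to be
almost split: it does not split (`β` is not a split epimorphism), both ends are
indecomposable, and every morphism to `M` which is not a split epimorphism factors
through `β`. -/
def IsAlmostSplitSeq {C : Type*} [Category C] {N E M : C} (_α : N ⟶ E) (β : E ⟶ M) : Prop :=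
  ¬ IsSplitEpi β ∧ IsIndecomposable N ∧ IsIndecomposable M ∧
    ∀ ⦃X : C⦄ (u : X ⟶ M), ¬ IsSplitEpi u → ∃ v : X ⟶ E, v ≫ β = u

/-- Short exactness of `0 → N → E → M → 0` in `mod Λ`, stated concretely. -/
def IsShortExactSeq {Λ : Type u} [Ring Λ] {N E M : FGModuleCat Λ}
    (α : N ⟶ E) (β : E ⟶ M) : Prop :=
  Function.Injective ⇑α ∧ Function.Exact ⇑α ⇑β ∧ Function.Surjective ⇑β

/-- Componentwise short exactness of a sequence in `maps (mod Λ)`. -/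
def IsShortExactSeqMaps {Λ : Type u} [Ring Λ] {X Y Z : Arrow (FGModuleCat Λ)}
    (α : X ⟶ Y) (β : Y ⟶ Z) : Prop :=
  IsShortExactSeq α.left β.left ∧ IsShortExactSeq α.right β.right

/-- An almost split sequence in `maps (mod Λ)`: a componentwise short exact sequence
which is almost split. -/
def IsAlmostSplitSeqMaps {Λ : Type u} [Ring Λ] {X Y Z : Arrow (FGModuleCat Λ)}
    (α : X ⟶ Y) (β : Y ⟶ Z) : Prop :=
  IsShortExactSeqMaps α β ∧ IsAlmostSplitSeq α β


set_option linter.unnecessarySimpa false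

section ArrowAux
variable {C : Type*} [Category C]

lemma aux_isZero_arrow {A : Arrow C} (hl : IsZero A.left) (hr : IsZero A.right) :
    IsZero A := by
  constructor
  · intro W
    exact ⟨⟨⟨Arrow.homMk (u := hl.to_ W.left) (v := hr.to_ W.right) (hl.eq_of_src _ _)⟩,
      fun f => Arrow.hom_ext _ _ (hl.eq_of_src _ _) (hr.eq_of_src _ _)⟩⟩
  · intro W
    exact ⟨⟨⟨Arrow.homMk (u := hl.from_ W.left) (v := hr.from_ W.right) (hr.eq_of_tgt _ _)⟩,
      fun f => Arrow.hom_ext _ _ (hl.eq_of_tgt _ _) (hr.eq_of_tgt _ _)⟩⟩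

lemma aux_isZero_of_retract {X Y : C} (hX : IsZero X) (i : Y ⟶ X) (p : X ⟶ Y)
    (h : i ≫ p = 𝟙 Y) : IsZero Y := by
  constructor
  · intro W
    refine ⟨⟨⟨i ≫ hX.to_ W⟩, fun f => ?_⟩⟩
    calc f = (i ≫ p) ≫ f := by rw [h, Category.id_comp]
    _ = i ≫ (p ≫ f) := by simp
    _ = i ≫ (p ≫ (i ≫ hX.to_ W)) := by rw [hX.eq_of_src (p ≫ f) (p ≫ (i ≫ hX.to_ W))]
    _ = (i ≫ p) ≫ (i ≫ hX.to_ W) := by simp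
    _ = i ≫ hX.to_ W := by rw [h, Category.id_comp]
  · intro W
    refine ⟨⟨⟨hX.from_ W ≫ p⟩, fun f => ?_⟩⟩
    calc f = f ≫ (i ≫ p) := by rw [h, Category.comp_id]
    _ = (f ≫ i) ≫ p := by simp
    _ = hX.from_ W ≫ p := by rw [hX.eq_of_tgt (f ≫ i) (hX.from_ W)]

lemma aux_leftProd {N : C} {Y Z : Arrow C}
    (p : Arrow.mk (𝟙 N) ⟶ Y) (q : Arrow.mk (𝟙 N) ⟶ Z)
    (t : IsLimit (BinaryFan.mk p q)) :
    Nonempty (IsLimit (BinaryFan.mk p.left q.left)) := by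
  have hp : p.right = p.left ≫ Y.hom := by simpa using (Arrow.w p).symm
  have hq : q.right = q.left ≫ Z.hom := by simpa using (Arrow.w q).symm
  have key : ∀ s : BinaryFan Y.left Z.left,
      ∃! l : s.pt ⟶ N, l ≫ p.left = s.fst ∧ l ≫ q.left = s.snd := by
    intro s
    obtain ⟨l, hl1, hl2⟩ := BinaryFan.IsLimit.lift' t
      (Arrow.homMk (u := s.fst) (v := s.fst ≫ Y.hom) (by simp) : Arrow.mk (𝟙 s.pt) ⟶ Y)
      (Arrow.homMk (u := s.snd) (v := s.snd ≫ Z.hom) (by simp))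
    refine ⟨l.left, ⟨?_, ?_⟩, fun m hm => ?_⟩
    · exact congrArg Arrow.Hom.left hl1
    · exact congrArg Arrow.Hom.left hl2
    · have hmeq : (Arrow.homMk (u := m) (v := m) (by simp) :
          Arrow.mk (𝟙 s.pt) ⟶ Arrow.mk (𝟙 N)) = l := by
        apply BinaryFan.IsLimit.hom_ext t
        · rw [BinaryFan.mk_fst]
          rw [show (BinaryFan.mk p q).fst = p from rfl] at hl1
          rw [hl1]
          refine Arrow.hom_ext _ _ hm.1 ?_
          have : m ≫ p.right = s.fst ≫ Y.hom := by rw [hp, ← Category.assoc, hm.1]; rfl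
          exact this
        · rw [BinaryFan.mk_snd]
          rw [show (BinaryFan.mk p q).snd = q from rfl] at hl2
          rw [hl2]
          refine Arrow.hom_ext _ _ hm.2 ?_
          have : m ≫ q.right = s.snd ≫ Z.hom := by rw [hq, ← Category.assoc, hm.2]; rfl
          exact this
      simpa using congrArg CommaMorphism.left hmeq
  exact ⟨BinaryFan.isLimitMk (fun s => (key s).exists.choose)
    (fun s => (key s).exists.choose_spec.1) (fun s => (key s).exists.choose_spec.2)
    (fun s m h1 h2 => ((key s).unique ⟨h1, h2⟩ (key s).exists.choose_spec))⟩

lemma aux_leftCoprod {N Z₀ : C} (hZ₀ : IsZero Z₀) {Y Z : Arrow C}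
    (i : Y ⟶ Arrow.mk (𝟙 N)) (j : Z ⟶ Arrow.mk (𝟙 N))
    (t : IsColimit (BinaryCofan.mk i j)) :
    Nonempty (IsColimit (BinaryCofan.mk i.left j.left)) := by
  have key : ∀ s : BinaryCofan Y.left Z.left,
      ∃! l : N ⟶ s.pt, i.left ≫ l = s.inl ∧ j.left ≫ l = s.inr := by
    intro s
    obtain ⟨l, hl1, hl2⟩ := BinaryCofan.IsColimit.desc' t
      (Arrow.homMk (u := s.inl) (v := hZ₀.from_ Y.right) (hZ₀.eq_of_tgt _ _) :
        Y ⟶ Arrow.mk (hZ₀.from_ s.pt))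
      (Arrow.homMk (u := s.inr) (v := hZ₀.from_ Z.right) (hZ₀.eq_of_tgt _ _))
    refine ⟨l.left, ⟨?_, ?_⟩, fun m hm => ?_⟩
    · exact congrArg Arrow.Hom.left hl1
    · exact congrArg Arrow.Hom.left hl2
    · have hmeq : (Arrow.homMk (u := m) (v := hZ₀.from_ N) (hZ₀.eq_of_tgt _ _) :
          Arrow.mk (𝟙 N) ⟶ Arrow.mk (hZ₀.from_ s.pt)) = l := by
        apply BinaryCofan.IsColimit.hom_ext t
        · rw [BinaryCofan.mk_inl]
          rw [show (BinaryCofan.mk i j).inl = i from rfl] at hl1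
          rw [hl1]
          exact Arrow.hom_ext _ _ hm.1 (hZ₀.eq_of_tgt _ _)
        · rw [BinaryCofan.mk_inr]
          rw [show (BinaryCofan.mk i j).inr = j from rfl] at hl2
          rw [hl2]
          exact Arrow.hom_ext _ _ hm.2 (hZ₀.eq_of_tgt _ _)
      simpa using congrArg CommaMorphism.left hmeq
  exact ⟨BinaryCofan.isColimitMk (fun s => (key s).exists.choose)
    (fun s => (key s).exists.choose_spec.1) (fun s => (key s).exists.choose_spec.2)
    (fun s m h1 h2 => ((key s).unique ⟨h1, h2⟩ (key s).exists.choose_spec))⟩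

lemma aux_rightProd {A Y Z : Arrow C} (hA : IsZero A.left)
    (p : A ⟶ Y) (q : A ⟶ Z) (t : IsLimit (BinaryFan.mk p q)) :
    Nonempty (IsLimit (BinaryFan.mk p.right q.right)) := by
  have key : ∀ s : BinaryFan Y.right Z.right,
      ∃! l : s.pt ⟶ A.right, l ≫ p.right = s.fst ∧ l ≫ q.right = s.snd := by
    intro s
    obtain ⟨l, hl1, hl2⟩ := BinaryFan.IsLimit.lift' t
      (Arrow.homMk (u := hA.to_ Y.left) (v := s.fst) (hA.eq_of_src _ _) :
        Arrow.mk (hA.to_ s.pt) ⟶ Y)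
      (Arrow.homMk (u := hA.to_ Z.left) (v := s.snd) (hA.eq_of_src _ _))
    refine ⟨l.right, ⟨?_, ?_⟩, fun m hm => ?_⟩
    · exact congrArg Arrow.Hom.right hl1
    · exact congrArg Arrow.Hom.right hl2
    · have hmeq : (Arrow.homMk (u := 𝟙 A.left) (v := m) (hA.eq_of_src _ _) :
          Arrow.mk (hA.to_ s.pt) ⟶ A) = l := by
        apply BinaryFan.IsLimit.hom_ext t
        · rw [BinaryFan.mk_fst]
          rw [show (BinaryFan.mk p q).fst = p from rfl] at hl1
          rw [hl1]
          exact Arrow.hom_ext _ _ (hA.eq_of_src _ _) hm.1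
        · rw [BinaryFan.mk_snd]
          rw [show (BinaryFan.mk p q).snd = q from rfl] at hl2
          rw [hl2]
          exact Arrow.hom_ext _ _ (hA.eq_of_src _ _) hm.2
      simpa using congrArg CommaMorphism.right hmeq
  exact ⟨BinaryFan.isLimitMk (fun s => (key s).exists.choose)
    (fun s => (key s).exists.choose_spec.1) (fun s => (key s).exists.choose_spec.2)
    (fun s m h1 h2 => ((key s).unique ⟨h1, h2⟩ (key s).exists.choose_spec))⟩

lemma aux_rightCoprod {A Y Z : Arrow C} (hY : IsZero Y.left) (hZ : IsZero Z.left)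
    (i : Y ⟶ A) (j : Z ⟶ A) (t : IsColimit (BinaryCofan.mk i j)) :
    Nonempty (IsColimit (BinaryCofan.mk i.right j.right)) := by
  have key : ∀ s : BinaryCofan Y.right Z.right,
      ∃! l : A.right ⟶ s.pt, i.right ≫ l = s.inl ∧ j.right ≫ l = s.inr := by
    intro s
    obtain ⟨l, hl1, hl2⟩ := BinaryCofan.IsColimit.desc' t
      (Arrow.homMk (u := Y.hom ≫ s.inl) (v := s.inl) (by simp) : Y ⟶ Arrow.mk (𝟙 s.pt))
      (Arrow.homMk (u := Z.hom ≫ s.inr) (v := s.inr) (by simp))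
    refine ⟨l.right, ⟨?_, ?_⟩, fun m hm => ?_⟩
    · exact congrArg Arrow.Hom.right hl1
    · exact congrArg Arrow.Hom.right hl2
    · have hmeq : (Arrow.homMk (u := A.hom ≫ m) (v := m) (by simp) :
          A ⟶ Arrow.mk (𝟙 s.pt)) = l := by
        apply BinaryCofan.IsColimit.hom_ext t
        · rw [BinaryCofan.mk_inl]
          rw [show (BinaryCofan.mk i j).inl = i from rfl] at hl1
          rw [hl1]
          exact Arrow.hom_ext _ _ (hY.eq_of_src _ _) hm.1
        · rw [BinaryCofan.mk_inr]
          rw [show (BinaryCofan.mk i j).inr = j from rfl] at hl2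
          rw [hl2]
          exact Arrow.hom_ext _ _ (hZ.eq_of_src _ _) hm.2
      simpa using congrArg CommaMorphism.right hmeq
  exact ⟨BinaryCofan.isColimitMk (fun s => (key s).exists.choose)
    (fun s => (key s).exists.choose_spec.1) (fun s => (key s).exists.choose_spec.2)
    (fun s m h1 h2 => ((key s).unique ⟨h1, h2⟩ (key s).exists.choose_spec))⟩

end ArrowAux

lemma aux_subsingleton_of_isZero {Λ : Type u} [Ring Λ] {Z : FGModuleCat Λ}
    (hZ : IsZero Z) (z : Z) : z = 0 := by
  have h := hZ.eq_of_src (𝟙 Z) 0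
  have h2 := congrArg (fun f : Z ⟶ Z => f z) h
  exact h2

/-- Let `Λ` be an artin algebra and `0 → N →j→ E →π→ M → 0` an almost
split sequence in `mod Λ`.  Then `0 → (1_N : N → N) → (j : N → E) → (0 → M) → 0`, whose
first morphism has components `1_N` and `j` and whose second morphism has components `0`
and `π`, is an almost split sequence in `maps (mod Λ)`. -/
theorem almostSplit_maps_of_almostSplit_left
    {R : Type u} [CommRing R] [IsArtinianRing R]
    {Λ : Type u} [Ring Λ] [Algebra R Λ] [Module.Finite R Λ]
    {N E M : FGModuleCat Λ} (j : N ⟶ E) (π : E ⟶ M)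
    (hw : j ≫ π = 0) (hex : IsShortExactSeq j π) (has : IsAlmostSplitSeq j π)
    (Z : FGModuleCat Λ) (hZ : IsZero Z) :
    IsAlmostSplitSeqMaps
      (X := Arrow.mk (𝟙 N)) (Y := Arrow.mk j) (Z := Arrow.mk (0 : Z ⟶ M))
      (Arrow.homMk (u := 𝟙 N) (v := j) (by simp))
      (Arrow.homMk (u := (0 : N ⟶ Z)) (v := π) (by simp [hw])) := by
  obtain ⟨hnse, hN, hM, hfac⟩ := has
  refine ⟨⟨⟨?_, ?_, ?_⟩, hex⟩, ?_, ⟨?_, ?_⟩, ⟨?_, ?_⟩, ?_⟩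
  -- left column injective
  · exact fun a b h => h
  -- left column exact
  · intro y
    constructor
    · intro _; exact ⟨y, rfl⟩
    · intro _; exact aux_subsingleton_of_isZero hZ _
  -- left column surjective
  · intro z
    exact ⟨0, (aux_subsingleton_of_isZero hZ _).symm.trans
      (aux_subsingleton_of_isZero hZ z).symm⟩
  -- β not split epi
  · intro hsplit
    obtain ⟨σ⟩ := hsplit.exists_splitEpi
    refine hnse (IsSplitEpi.mk' ⟨σ.section_.right, ?_⟩)
    exact congrArg CommaMorphism.right σ.id
  -- Arrow.mk (𝟙 N) indecomposable : nonzero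
  · intro h
    apply hN.1
    rw [IsZero.iff_id_eq_zero]
    have := h.eq_of_src (𝟙 (Arrow.mk (𝟙 N)))
      (Arrow.homMk (u := (0 : N ⟶ N)) (v := (0 : N ⟶ N)) (by simp))
    simpa using congrArg CommaMorphism.left this
  -- Arrow.mk (𝟙 N) indecomposable : decompositions
  · intro Y' Z' p q i jj h1 h2 ⟨t⟩ ⟨ct⟩
    have hl1 : i.left ≫ p.left = 𝟙 Y'.left := by
      simpa using congrArg CommaMorphism.left h1
    have hl2 : jj.left ≫ q.left = 𝟙 Z'.left := by
      simpa using congrArg CommaMorphism.left h2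
    have hr1 : i.right ≫ p.right = 𝟙 Y'.right := by
      simpa using congrArg CommaMorphism.right h1
    have hr2 : jj.right ≫ q.right = 𝟙 Z'.right := by
      simpa using congrArg CommaMorphism.right h2
    have hpw : p.right = p.left ≫ Y'.hom := by simpa using (Arrow.w p).symm
    have hiw : i.left = Y'.hom ≫ i.right := by simpa using Arrow.w i
    have hqw : q.right = q.left ≫ Z'.hom := by simpa using (Arrow.w q).symm
    have hjw : jj.left = Z'.hom ≫ jj.right := by simpa using Arrow.w jj
    rcases hN.2 p.left q.left i.left jj.left hl1 hl2
        (aux_leftProd p q t) (aux_leftCoprod hZ i jj ct) with hY | hZ'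
    · left
      refine aux_isZero_arrow hY (hY.of_iso ?_)
      exact ⟨i.right ≫ p.left, Y'.hom, by rw [Category.assoc, ← hpw, hr1],
        by rw [← Category.assoc, ← hiw, hl1]⟩
    · right
      refine aux_isZero_arrow hZ' (hZ'.of_iso ?_)
      exact ⟨jj.right ≫ q.left, Z'.hom, by rw [Category.assoc, ← hqw, hr2],
        by rw [← Category.assoc, ← hjw, hl2]⟩
  -- Arrow.mk (0 : Z ⟶ M) indecomposable : nonzero
  · intro h
    apply hM.1
    rw [IsZero.iff_id_eq_zero]
    have := h.eq_of_src (𝟙 (Arrow.mk (0 : Z ⟶ M)))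
      (Arrow.homMk (u := (0 : Z ⟶ Z)) (v := (0 : M ⟶ M)) (by simp))
    simpa using congrArg CommaMorphism.right this
  -- Arrow.mk (0 : Z ⟶ M) indecomposable : decompositions
  · intro Y' Z' p q i jj h1 h2 ⟨t⟩ ⟨ct⟩
    have hl1 : i.left ≫ p.left = 𝟙 Y'.left := by
      simpa using congrArg CommaMorphism.left h1
    have hl2 : jj.left ≫ q.left = 𝟙 Z'.left := by
      simpa using congrArg CommaMorphism.left h2
    have hr1 : i.right ≫ p.right = 𝟙 Y'.right := by
      simpa using congrArg CommaMorphism.right h1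
    have hr2 : jj.right ≫ q.right = 𝟙 Z'.right := by
      simpa using congrArg CommaMorphism.right h2
    have hYl : IsZero Y'.left := aux_isZero_of_retract hZ i.left p.left hl1
    have hZl : IsZero Z'.left := aux_isZero_of_retract hZ jj.left q.left hl2
    rcases hM.2 p.right q.right i.right jj.right hr1 hr2
        (aux_rightProd hZ p q t) (aux_rightCoprod hYl hZl i jj ct) with hY | hZ'
    · exact Or.inl (aux_isZero_arrow hYl hY)
    · exact Or.inr (aux_isZero_arrow hZl hZ')
  -- factorization
  · intro X u hu
    have hru : ¬ IsSplitEpi u.right := by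
      intro hs
      obtain ⟨σ⟩ := hs.exists_splitEpi
      refine hu (IsSplitEpi.mk' ⟨Arrow.homMk (u := (0 : Z ⟶ X.left)) (v := σ.section_)
        (by simp), ?_⟩)
      refine Arrow.hom_ext _ _ (hZ.eq_of_src _ _) ?_
      simpa using σ.id
    obtain ⟨v, hv⟩ := hfac u.right hru
    have hw0 : ∀ x : X.left, π (v (X.hom x)) = 0 := by
      intro x
      have h1 : X.hom ≫ u.right = u.left ≫ (0 : Z ⟶ M) := (Arrow.w u).symm
      have h3 := congrArg (fun f : X.left ⟶ M => f x) h1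
      have h4 : X.hom ≫ (v ≫ π) = X.hom ≫ u.right := by rw [hv]
      have h5 := congrArg (fun f : X.left ⟶ M => f x) h4
      calc π (v (X.hom x)) = (X.hom ≫ (v ≫ π)) x := rfl
        _ = (X.hom ≫ u.right) x := by simpa using h5
        _ = (u.left ≫ (0 : Z ⟶ M)) x := by simpa using h3
        _ = 0 := rfl
    let j' : (N : Type _) →ₗ[Λ] E := j.hom.hom
    let f' : (X.left : Type _) →ₗ[Λ] E := (X.hom ≫ v).hom.hom
    have hmem : ∀ x, f' x ∈ LinearMap.range j' := fun x =>
      LinearMap.mem_range.mpr ((hex.2.1 _).mp (hw0 x))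
    let lN : X.left ⟶ N := FGModuleCat.ofHom <| show (X.left : Type _) →ₗ[Λ] N from
      (LinearEquiv.ofInjective j' hex.1).symm.toLinearMap ∘ₗ
        LinearMap.codRestrict (LinearMap.range j') f' hmem
    have hlN : ∀ x : X.left, j' (lN x) = f' x := fun x =>
      LinearEquiv.ofInjective_symm_apply (f := j') (h := hex.1)
        (⟨f' x, hmem x⟩ : LinearMap.range j')
    refine ⟨Arrow.homMk (u := lN) (v := v) ?_, ?_⟩
    · exact FGModuleCat.hom_ext (LinearMap.ext fun x => hlN x)
    · refine Arrow.hom_ext _ _ (hZ.eq_of_tgt _ _) ?_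
      simpa using hv
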